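/- Let a > 0 and let u ∈ C⁴([0,a]) satisfy the elastica equation (1/√(1+u'²)) · d/dx( κ_u'/√(1+u'²) ) + (1/2)κ_u³ = 0 on (0,a), where κ_u = u''/(1+u'²)^{3/2}. Then the function x ↦ 2 u'''(x)/(1+u'(x)²)^{5/2} − 5 u''(x)² u'(x)/(1+u'(x)²)^{7/2} is constant on (0,a). -/

import Mathlib

open Real MeasureTheory

private lemma rpow_half (W : ℝ) (hW : 0 < W) (k : ℕ) :
    W ^ ((k : ℝ)/2) = Real.sqrt W ^ k := by
  rw [Real.sqrt_eq_rpow, ← Real.rpow_natCast (W ^ ((1:ℝ)/2)) k, ← Real.rpow_mul hW.le]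
  congr 1
  ring

private lemma sq_rpow_half (T : ℝ) (hT : 0 < T) (k : ℕ) :
    (T ^ 2 : ℝ) ^ ((k : ℝ)/2) = T ^ k := by
  rw [show (T ^ 2 : ℝ) = T ^ ((2:ℕ):ℝ) from (Real.rpow_natCast T 2).symm,
    ← Real.rpow_mul hT.le, show ((2:ℕ):ℝ) * ((k:ℝ)/2) = (k:ℝ) by push_cast; ring,
    Real.rpow_natCast]


/-- The curvature of the graph `(x, u x)`. -/
noncomputable def curv (u : ℝ → ℝ) (x : ℝ) : ℝ :=
  iteratedDeriv 2 u x / (1 + deriv u x ^ 2) ^ ((3:ℝ)/2)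

/-- `u` satisfies the elastica equation
`(1/√(1+u'²)) (κ_u'/√(1+u'²))' + κ_u³/2 = 0` on the set `E`. -/
def ElasticaOn (u : ℝ → ℝ) (E : Set ℝ) : Prop :=
  ∀ x ∈ E,
    (1 / Real.sqrt (1 + deriv u x ^ 2)) *
        deriv (fun y => deriv (curv u) y / Real.sqrt (1 + deriv u y ^ 2)) x
      + (1/2) * curv u x ^ 3 = 0

/-- If `u ∈ C⁴` solves the elastica equation on `(0,a)`, then
`x ↦ 2u'''/(1+u'²)^{5/2} − 5u''²u'/(1+u'²)^{7/2}` is constant on `(0,a)`. -/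
theorem stmt_6 (a : ℝ) (ha : 0 < a) (u : ℝ → ℝ) (hu : ContDiff ℝ 4 u)
    (heq : ElasticaOn u (Set.Ioo 0 a)) :
    ∀ x ∈ Set.Ioo (0:ℝ) a, ∀ y ∈ Set.Ioo (0:ℝ) a,
      2 * iteratedDeriv 3 u x / (1 + deriv u x ^ 2) ^ ((5:ℝ)/2)
          - 5 * iteratedDeriv 2 u x ^ 2 * deriv u x / (1 + deriv u x ^ 2) ^ ((7:ℝ)/2)
        = 2 * iteratedDeriv 3 u y / (1 + deriv u y ^ 2) ^ ((5:ℝ)/2)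
          - 5 * iteratedDeriv 2 u y ^ 2 * deriv u y / (1 + deriv u y ^ 2) ^ ((7:ℝ)/2) := by
  set p := deriv u with hpdef
  set q := deriv p with hqdef
  set r := deriv q with hrdef
  set s := deriv r with hsdef
  have hCp : ContDiff ℝ 3 p := (contDiff_succ_iff_deriv.mp (by exact_mod_cast hu)).2.2
  have hCq : ContDiff ℝ 2 q := (contDiff_succ_iff_deriv.mp (by exact_mod_cast hCp)).2.2
  have hCr : ContDiff ℝ 1 r := (contDiff_succ_iff_deriv.mp (by exact_mod_cast hCq)).2.2
  have hdp : ∀ x, HasDerivAt p (q x) x := fun x =>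
    ((hCp.differentiable (by norm_num)) x).hasDerivAt
  have hdq : ∀ x, HasDerivAt q (r x) x := fun x =>
    ((hCq.differentiable (by norm_num)) x).hasDerivAt
  have hdr : ∀ x, HasDerivAt r (s x) x := fun x =>
    ((hCr.differentiable (by norm_num)) x).hasDerivAt
  have hw : ∀ x : ℝ, (0:ℝ) < 1 + p x ^ 2 := fun x => by positivity
  have hdw : ∀ x, HasDerivAt (fun y => 1 + p y ^ 2) (2 * p x * q x) x := fun x => by
    simpa [mul_comm] using ((hdp x).pow 2).const_add 1
  have hq2 : iteratedDeriv 2 u = q := by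
    rw [iteratedDeriv_succ, iteratedDeriv_one]
  have hr3 : iteratedDeriv 3 u = r := by
    rw [iteratedDeriv_succ, hq2]
  have hcurv : curv u = fun x => q x / (1 + p x ^ 2) ^ ((3:ℝ)/2) := by
    funext x; rw [curv, hq2]
  -- derivative of the curvature
  have hGd : ∀ x, HasDerivAt (curv u)
      ((r x * (1 + p x ^ 2) - 3 * (p x * q x ^ 2)) / (1 + p x ^ 2) ^ ((5:ℝ)/2)) x := by
    intro x
    rw [hcurv]
    have hwx := hw x
    have hT2 : Real.sqrt (1 + p x ^ 2) ^ 2 = 1 + p x ^ 2 := Real.sq_sqrt hwx.le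
    have hden : HasDerivAt (fun y => (1 + p y ^ 2) ^ ((3:ℝ)/2))
        ((2 * p x * q x) * ((3:ℝ)/2) * (1 + p x ^ 2) ^ ((3:ℝ)/2 - 1)) x :=
      (hdw x).rpow_const (Or.inl hwx.ne')
    have h1 := (hdq x).div hden (by positivity)
    refine h1.congr_deriv ?_
    symm
    rw [show ((3:ℝ)/2 - 1) = ((1:ℕ):ℝ)/2 by norm_num,
      show ((3:ℝ)/2) = ((3:ℕ):ℝ)/2 by norm_num,
      show ((5:ℝ)/2) = ((5:ℕ):ℝ)/2 by norm_num,
      rpow_half _ hwx, rpow_half _ hwx, rpow_half _ hwx]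
    have hT : 0 < Real.sqrt (1 + p x ^ 2) := Real.sqrt_pos.mpr hwx
    field_simp
    linear_combination (-r x) * hT2
  -- rewrite the inner function with integer powers
  have hH : (fun y => deriv (curv u) y / Real.sqrt (1 + p y ^ 2)) =
      fun y => (r y * (1 + p y ^ 2) - 3 * (p y * q y ^ 2)) / (1 + p y ^ 2) ^ 3 := by
    funext y
    rw [(hGd y).deriv]
    have hwy := hw y
    have h6 : Real.sqrt (1 + p y ^ 2) ^ 6 = (1 + p y ^ 2) ^ 3 := by
      rw [show (6:ℕ) = 2*3 from rfl, pow_mul, Real.sq_sqrt hwy.le]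
    have hden : (1 + p y ^ 2) ^ ((5:ℝ)/2) * Real.sqrt (1 + p y ^ 2) = (1 + p y ^ 2) ^ 3 := by
      rw [show ((5:ℝ)/2) = ((5:ℕ):ℝ)/2 by norm_num, rpow_half _ hwy, ← h6]
      ring
    rw [div_div, hden]
  -- the target function has zero derivative on (0, a)
  have key : ∀ x ∈ Set.Ioo (0:ℝ) a, HasDerivAt
      (fun z => 2 * r z / (1 + p z ^ 2) ^ ((5:ℝ)/2)
        - 5 * q z ^ 2 * p z / (1 + p z ^ 2) ^ ((7:ℝ)/2)) 0 x := by
    intro x hx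
    have hwx := hw x
    obtain ⟨T, hT0, hW⟩ : ∃ T : ℝ, 0 < T ∧ 1 + p x ^ 2 = T ^ 2 :=
      ⟨Real.sqrt (1 + p x ^ 2), Real.sqrt_pos.mpr hwx, (Real.sq_sqrt hwx.le).symm⟩
    have hTne : T ≠ 0 := hT0.ne'
    -- the elastica equation at x, in polynomial form
    have hnum : HasDerivAt (fun y => r y * (1 + p y ^ 2) - 3 * (p y * q y ^ 2))
        (s x * (1 + p x ^ 2) + r x * (2 * p x * q x)
          - 3 * (q x * q x ^ 2 + p x * (2 * q x ^ 1 * r x))) x := by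
      refine (((hdr x).mul (hdw x)).sub (((hdp x).mul ((hdq x).pow 2)).const_mul 3)).congr_deriv ?_
      simp only [Pi.pow_apply, Nat.cast_ofNat, show (2:ℕ)-1 = 1 from rfl]
    have hden3 : HasDerivAt (fun y => (1 + p y ^ 2) ^ 3)
        (3 * (1 + p x ^ 2) ^ 2 * (2 * p x * q x)) x := by
      refine ((hdw x).pow 3).congr_deriv ?_
      norm_num
    have hkey := heq x hx
    rw [← hpdef] at hkey
    rw [hH, (show HasDerivAt
      (fun y => (r y * (1 + p y ^ 2) - 3 * (p y * q y ^ 2)) / (1 + p y ^ 2) ^ 3) _ x from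
      hnum.div hden3 (by positivity)).deriv] at hkey
    simp only [hcurv] at hkey
    rw [hW, Real.sqrt_sq hT0.le,
      show ((3:ℝ)/2) = ((3:ℕ):ℝ)/2 by norm_num, sq_rpow_half T hT0 3] at hkey
    -- now assemble the derivative of the target function
    have h51 : HasDerivAt (fun z => (1 + p z ^ 2) ^ ((5:ℝ)/2))
        ((2 * p x * q x) * ((5:ℝ)/2) * (1 + p x ^ 2) ^ ((5:ℝ)/2 - 1)) x :=
      (hdw x).rpow_const (Or.inl hwx.ne')
    have h71 : HasDerivAt (fun z => (1 + p z ^ 2) ^ ((7:ℝ)/2))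
        ((2 * p x * q x) * ((7:ℝ)/2) * (1 + p x ^ 2) ^ ((7:ℝ)/2 - 1)) x :=
      (hdw x).rpow_const (Or.inl hwx.ne')
    have hfull := (((hdr x).const_mul 2).div h51 (by positivity)).sub
      ((((hdq x).pow 2).const_mul 5).mul (hdp x)  |>.div h71 (by positivity))
    refine hfull.congr_deriv ?_
    symm
    rw [show ((5:ℝ)/2 - 1) = ((3:ℕ):ℝ)/2 by norm_num,
      show ((7:ℝ)/2 - 1) = ((5:ℕ):ℝ)/2 by norm_num,
      show ((5:ℝ)/2) = ((5:ℕ):ℝ)/2 by norm_num,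
      show ((7:ℝ)/2) = ((7:ℕ):ℝ)/2 by norm_num,
      hW, sq_rpow_half T hT0 3, sq_rpow_half T hT0 5, sq_rpow_half T hT0 7]
    simp only [Pi.pow_apply, Pi.mul_apply, Nat.cast_ofNat, show (2:ℕ)-1 = 1 from rfl, pow_one]
    field_simp at hkey ⊢
    linear_combination (-1) * hkey + (q x ^ 3) * hW
  -- conclude: zero derivative on a convex set gives a constant function
  intro x hx y hy
  simp only [hq2, hr3]
  have hdiff : DifferentiableOn ℝ
      (fun z => 2 * r z / (1 + p z ^ 2) ^ ((5:ℝ)/2)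
        - 5 * q z ^ 2 * p z / (1 + p z ^ 2) ^ ((7:ℝ)/2)) (Set.Ioo 0 a) :=
    fun z hz => (key z hz).differentiableAt.differentiableWithinAt
  exact (convex_Ioo 0 a).is_const_of_fderivWithin_eq_zero hdiff
    (fun z hz => by
      rw [fderivWithin_of_isOpen isOpen_Ioo hz, (key z hz).hasFDerivAt.fderiv]
      ext
      simp) hx hy
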